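/- For fixed real numbers m < M and x₃ with m < x₃ ≤ M, the function s(a) = [(1-2a(M-x₃))/(1-2a(M-m))]² · (1-4a(M-m))/(1-4a(M-x₃)) is strictly increasing on (-∞, 0], tends to (M-x₃)/(M-m) as a → -∞, and equals 1 at a = 0. Hence for σ ∈ ((M-x₃)/(M-m), 1) there is a unique negative solution a⁻ of s(a) = σ. -/

import Mathlib

open Filter Set Topology

private lemma aux_pos {a c k : ℝ} (ha : a ≤ 0) (hc : 0 ≤ c) (hk : 0 ≤ k) :
    0 < 1 - k * a * c := by nlinarith [mul_nonneg (mul_nonneg hk (neg_nonneg.2 ha)) hc]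

private lemma inv_tendsto_atBot_zero : Tendsto (fun a : ℝ => a⁻¹) atBot (nhds 0) := by
  have h1 : Tendsto (fun a : ℝ => (-a)⁻¹) atBot (nhds 0) :=
    (tendsto_inv_atTop_zero (𝕜 := ℝ)).comp tendsto_neg_atBot_atTop
  have h2 := h1.neg
  have h3 : (fun a : ℝ => -(-a)⁻¹) = fun a : ℝ => a⁻¹ := by
    funext a; rw [inv_neg, neg_neg]
  rwa [h3, neg_zero] at h2

/-- s(a) is strictly increasing on (-∞,0], tends to (M-x₃)/(M-m) as a → -∞,
equals 1 at a = 0; hence for σ ∈ ((M-x₃)/(M-m), 1) there is a unique negative solution of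
s(a) = σ. -/
theorem stmt2 (m M x₃ : ℝ) (hmM : m < M) (hx₃m : m < x₃) (hx₃M : x₃ ≤ M)
    (s : ℝ → ℝ)
    (hs : ∀ a, s a = ((1 - 2*a*(M - x₃)) / (1 - 2*a*(M - m)))^2 *
      ((1 - 4*a*(M - m)) / (1 - 4*a*(M - x₃)))) :
    StrictMonoOn s (Set.Iic 0) ∧
    Tendsto s atBot (nhds ((M - x₃)/(M - m))) ∧
    s 0 = 1 ∧
    ∀ σ : ℝ, (M - x₃)/(M - m) < σ → σ < 1 → ∃! a : ℝ, a < 0 ∧ s a = σ := by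
  obtain ⟨p, hp_def⟩ : ∃ p : ℝ, M - x₃ = p := ⟨_, rfl⟩
  obtain ⟨q, hq_def⟩ : ∃ q : ℝ, M - m = q := ⟨_, rfl⟩
  rw [hp_def, hq_def] at hs ⊢
  have hp : 0 ≤ p := by rw [← hp_def]; linarith
  have hq : 0 < q := by rw [← hq_def]; linarith
  have hpq : p < q := by rw [← hp_def, ← hq_def]; linarith
  have hseq : ∀ a, s a = ((1 - 2*a*p)^2 * (1 - 4*a*q)) / ((1 - 2*a*q)^2 * (1 - 4*a*p)) := by
    intro a
    rw [hs a, div_pow, div_mul_div_comm]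
  -- positivity of pieces on Iic 0
  have h2p : ∀ a : ℝ, a ≤ 0 → 0 < 1 - 2*a*p := fun a ha => aux_pos ha hp (by norm_num)
  have h2q : ∀ a : ℝ, a ≤ 0 → 0 < 1 - 2*a*q := fun a ha => aux_pos ha hq.le (by norm_num)
  have h4p : ∀ a : ℝ, a ≤ 0 → 0 < 1 - 4*a*p := fun a ha => aux_pos ha hp (by norm_num)
  have h4q : ∀ a : ℝ, a ≤ 0 → 0 < 1 - 4*a*q := fun a ha => aux_pos ha hq.le (by norm_num)
  have hDne : ∀ a : ℝ, a ≤ 0 → (1 - 2*a*q)^2 * (1 - 4*a*p) ≠ 0 := by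
    intro a ha
    have := h2q a ha; have := h4p a ha
    positivity
  -- continuity on Iic 0
  have hcont : ContinuousOn s (Set.Iic 0) := by
    have : ContinuousOn (fun a : ℝ => ((1 - 2*a*p)^2 * (1 - 4*a*q)) /
        ((1 - 2*a*q)^2 * (1 - 4*a*p))) (Set.Iic 0) := by
      apply ContinuousOn.div (by fun_prop) (by fun_prop)
      intro a ha
      exact hDne a ha
    exact this.congr (fun a _ => hseq a)
  -- strict monotonicity
  have hmono : StrictMonoOn s (Set.Iic 0) := by
    have key : StrictMonoOn (fun a : ℝ => ((1 - 2*a*p)^2 * (1 - 4*a*q)) /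
        ((1 - 2*a*q)^2 * (1 - 4*a*p))) (Set.Iic 0) := by
      apply strictMonoOn_of_deriv_pos (convex_Iic 0)
      · apply ContinuousOn.div (by fun_prop) (by fun_prop)
        intro a ha
        exact hDne a ha
      · intro a ha
        rw [interior_Iic] at ha
        have ha' : a < 0 := ha
        have hN : HasDerivAt (fun x : ℝ => (1 - 2*x*p)^2 * (1 - 4*x*q))
            (2 * (1 - 2*a*p)^1 * (0 - 2*1*p) * (1 - 4*a*q)
              + (1 - 2*a*p)^2 * (0 - 4*1*q)) a := by
          have h1 : HasDerivAt (fun x : ℝ => 1 - 2*x*p) (0 - 2*1*p) a := by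
            simpa using (((hasDerivAt_id a).const_mul 2).mul_const p).const_sub 1
          have h2 : HasDerivAt (fun x : ℝ => 1 - 4*x*q) (0 - 4*1*q) a := by
            simpa using (((hasDerivAt_id a).const_mul 4).mul_const q).const_sub 1
          simpa using (h1.fun_pow 2).fun_mul h2
        have hD : HasDerivAt (fun x : ℝ => (1 - 2*x*q)^2 * (1 - 4*x*p))
            (2 * (1 - 2*a*q)^1 * (0 - 2*1*q) * (1 - 4*a*p)
              + (1 - 2*a*q)^2 * (0 - 4*1*p)) a := by
          have h1 : HasDerivAt (fun x : ℝ => 1 - 2*x*q) (0 - 2*1*q) a := by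
            simpa using (((hasDerivAt_id a).const_mul 2).mul_const q).const_sub 1
          have h2 : HasDerivAt (fun x : ℝ => 1 - 4*x*p) (0 - 4*1*p) a := by
            simpa using (((hasDerivAt_id a).const_mul 4).mul_const p).const_sub 1
          simpa using (h1.fun_pow 2).fun_mul h2
        have hdiv := hN.fun_div hD (hDne a ha'.le)
        rw [hdiv.deriv]
        apply div_pos
        · have hfact : (2 * (1 - 2*a*p)^1 * (0 - 2*1*p) * (1 - 4*a*q)
              + (1 - 2*a*p)^2 * (0 - 4*1*q)) * ((1 - 2*a*q)^2 * (1 - 4*a*p))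
              - ((1 - 2*a*p)^2 * (1 - 4*a*q)) * (2 * (1 - 2*a*q)^1 * (0 - 2*1*q) * (1 - 4*a*p)
              + (1 - 2*a*q)^2 * (0 - 4*1*p))
              = (-8*a) * (q - p) * ((p + q) - 6*a*p*q) * (1 - 2*a*p) * (1 - 2*a*q) := by
            ring
          rw [hfact]
          have h1 : (0:ℝ) < -8*a := by linarith
          have h2 : (0:ℝ) < q - p := by linarith
          have h3 : (0:ℝ) < (p + q) - 6*a*p*q := by
            nlinarith [mul_nonneg (mul_nonneg (by linarith : (0:ℝ) ≤ -a) hp) hq.le]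
          have h4 := h2p a ha'.le
          have h5 := h2q a ha'.le
          positivity
        · have := h2q a ha'.le; have := h4p a ha'.le
          positivity
    intro a haa b hbb hab
    rw [hseq a, hseq b]
    exact key haa hbb hab
  -- value at 0
  have hzero : s 0 = 1 := by rw [hs 0]; norm_num
  -- limit at -infinity
  have hlim : Tendsto s atBot (nhds (p / q)) := by
    rcases eq_or_lt_of_le hp with hp0 | hp0
    · -- p = 0
      have hF : ContinuousAt (fun t : ℝ => (t * (t - 4*q)) / ((t - 2*q)^2)) 0 := by
        apply ContinuousAt.div (by fun_prop) (by fun_prop)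
        have h1 : (0:ℝ) - 2*q ≠ 0 := by intro h; nlinarith
        positivity
      have hcomp : Tendsto (fun a : ℝ => (a⁻¹ * (a⁻¹ - 4*q)) / ((a⁻¹ - 2*q)^2)) atBot
          (nhds ((0 * ((0:ℝ) - 4*q)) / (((0:ℝ) - 2*q)^2))) := hF.tendsto.comp inv_tendsto_atBot_zero
      have hval : (0 * ((0:ℝ) - 4*q)) / (((0:ℝ) - 2*q)^2) = p / q := by
        rw [← hp0]; simp
      rw [hval] at hcomp
      refine hcomp.congr' ?_
      filter_upwards [eventually_lt_atBot (0:ℝ)] with a ha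
      have hane : a ≠ 0 := ne_of_lt ha
      have e2q : a⁻¹ - 2*q ≠ 0 := by
        intro h
        have h' : 1 - 2*a*q = a * (a⁻¹ - 2*q) := by field_simp
        rw [h, mul_zero] at h'
        have := h2q a ha.le; linarith
      rw [hseq a, ← hp0]
      have hd2 : (1 - 2*a*q)^2 * (1 - 4*a*(0:ℝ)) ≠ 0 := by
        have h1 := h2q a ha.le
        have h2 : (1:ℝ) - 4*a*0 = 1 := by ring
        rw [h2, mul_one]
        positivity
      rw [div_eq_div_iff (pow_ne_zero 2 e2q) hd2]
      field_simp
      ring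
    · -- p > 0
      have hF : ContinuousAt
          (fun t : ℝ => ((t - 2*p)^2 * (t - 4*q)) / ((t - 2*q)^2 * (t - 4*p))) 0 := by
        apply ContinuousAt.div (by fun_prop) (by fun_prop)
        have h1 : (0:ℝ) - 2*q ≠ 0 := by intro h; nlinarith
        have h2 : (0:ℝ) - 4*p ≠ 0 := by intro h; nlinarith
        exact mul_ne_zero (pow_ne_zero 2 h1) h2
      have hcomp : Tendsto
          (fun a : ℝ => ((a⁻¹ - 2*p)^2 * (a⁻¹ - 4*q)) / ((a⁻¹ - 2*q)^2 * (a⁻¹ - 4*p))) atBot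
          (nhds ((((0:ℝ) - 2*p)^2 * (0 - 4*q)) / (((0:ℝ) - 2*q)^2 * (0 - 4*p)))) :=
        hF.tendsto.comp inv_tendsto_atBot_zero
      have hval : ((((0:ℝ) - 2*p)^2 * (0 - 4*q)) / (((0:ℝ) - 2*q)^2 * (0 - 4*p))) = p / q := by
        have hd : (((0:ℝ) - 2*q)^2 * (0 - 4*p)) ≠ 0 := by
          have h1 : (0:ℝ) - 2*q ≠ 0 := by intro h; nlinarith
          have h2 : (0:ℝ) - 4*p ≠ 0 := by intro h; nlinarith
          exact mul_ne_zero (pow_ne_zero 2 h1) h2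
        rw [div_eq_div_iff hd hq.ne']
        ring
      rw [hval] at hcomp
      refine hcomp.congr' ?_
      filter_upwards [eventually_lt_atBot (0:ℝ)] with a ha
      have hane : a ≠ 0 := ne_of_lt ha
      have e2q : a⁻¹ - 2*q ≠ 0 := by
        intro h
        have h' : 1 - 2*a*q = a * (a⁻¹ - 2*q) := by field_simp
        rw [h, mul_zero] at h'
        have := h2q a ha.le; linarith
      have e4p : a⁻¹ - 4*p ≠ 0 := by
        intro h
        have h' : 1 - 4*a*p = a * (a⁻¹ - 4*p) := by field_simp
        rw [h, mul_zero] at h'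
        have := h4p a ha.le; linarith
      rw [hseq a]
      rw [div_eq_div_iff (mul_ne_zero (pow_ne_zero 2 e2q) e4p) (hDne a ha.le)]
      field_simp
  refine ⟨hmono, hlim, hzero, ?_⟩
  intro σ hσ1 hσ2
  have hev : ∀ᶠ a in atBot, s a < σ := hlim.eventually_lt_const hσ1
  obtain ⟨a₀, ha₀σ, ha₀0⟩ := (hev.and (eventually_lt_atBot (0:ℝ))).exists
  have hsub : Set.Icc a₀ 0 ⊆ Set.Iic 0 := fun x hx => hx.2
  have hIVT := intermediate_value_Icc ha₀0.le (hcont.mono hsub)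
  have hσmem : σ ∈ Set.Icc (s a₀) (s 0) := ⟨ha₀σ.le, by rw [hzero]; exact hσ2.le⟩
  obtain ⟨c, hc, hcσ⟩ := hIVT hσmem
  have hc0 : c < 0 := by
    rcases lt_or_eq_of_le hc.2 with h | h
    · exact h
    · exfalso; rw [h, hzero] at hcσ; linarith
  refine ⟨c, ⟨hc0, hcσ⟩, ?_⟩
  intro b hb
  exact hmono.injOn (Set.mem_Iic.2 hb.1.le) (Set.mem_Iic.2 hc0.le) (by rw [hb.2, hcσ])
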